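/- Let a = (a₁,a₂,a₃), b = (b₁,b₂,b₃) ∈ ℤ³ satisfy the Eschenburg freeness condition and a₁+a₂+a₃ = b₁+b₂+b₃. Then σ₂(a) − σ₂(b) is odd; in particular σ₂(a) ≠ σ₂(b). -/

import Mathlib

/-- The `k`-th elementary symmetric polynomial of the entries of a tuple `x : Fin n → ℤ`. -/
def esymm {n : ℕ} (k : ℕ) (x : Fin n → ℤ) : ℤ :=
  ∑ s ∈ Finset.powersetCard k (Finset.univ : Finset (Fin n)), ∏ i ∈ s, x i


lemma esymm_two_eq (x : Fin 3 → ℤ) :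
    esymm 2 x = x 0 * x 1 + x 0 * x 2 + x 1 * x 2 := by
  have h : (Finset.powersetCard 2 (Finset.univ : Finset (Fin 3)))
      = {{0, 1}, {0, 2}, {1, 2}} := by decide
  rw [esymm, h]
  rw [Finset.sum_insert (by decide), Finset.sum_insert (by decide),
    Finset.sum_singleton]
  rw [Finset.prod_pair (show (0:Fin 3) ≠ 1 by decide),
    Finset.prod_pair (show (0:Fin 3) ≠ 2 by decide),
    Finset.prod_pair (show (1:Fin 3) ≠ 2 by decide)]
  ring

lemma gcd_one_not_both (x y : ℤ) (h : Int.gcd x y = 1)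
    (hx : ((x : ZMod 2) = 0)) (hy : ((y : ZMod 2) = 0)) : False := by
  rw [ZMod.intCast_zmod_eq_zero_iff_dvd] at hx hy
  have h2 : (2 : ℤ) ∣ (Int.gcd x y : ℤ) := Int.dvd_coe_gcd hx hy
  rw [h] at h2
  norm_num at h2

set_option synthInstance.maxSize 2000
set_option maxHeartbeats 1000000

/-- If `a`, `b` satisfy the Eschenburg freeness condition and
`a₁+a₂+a₃ = b₁+b₂+b₃`, then `σ₂(a) − σ₂(b)` is odd; in particular `σ₂(a) ≠ σ₂(b)`. -/
theorem esymm_two_sub_odd (a b : Fin 3 → ℤ)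
    (hfree : ∀ σ : Equiv.Perm (Fin 3), Int.gcd (a 0 - b (σ 0)) (a 1 - b (σ 1)) = 1)
    (hsum : a 0 + a 1 + a 2 = b 0 + b 1 + b 2) :
    Odd (esymm 2 a - esymm 2 b) ∧ esymm 2 a ≠ esymm 2 b := by
  have key : Odd (esymm 2 a - esymm 2 b) := by
    rw [esymm_two_eq, esymm_two_eq, ← Int.not_even_iff_odd]
    intro hev
    have hz : ((a 0 * a 1 + a 0 * a 2 + a 1 * a 2
        - (b 0 * b 1 + b 0 * b 2 + b 1 * b 2) : ℤ) : ZMod 2) = 0 := by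
      rw [ZMod.intCast_zmod_eq_zero_iff_dvd]
      exact_mod_cast Int.dvd_of_emod_eq_zero (Int.even_iff.mp hev)
    push_cast at hz
    have hs : ((a 0 : ZMod 2)) + (a 1 : ZMod 2) + (a 2 : ZMod 2)
        = (b 0 : ZMod 2) + (b 1 : ZMod 2) + (b 2 : ZMod 2) := by
      exact_mod_cast congrArg (fun z : ℤ => (z : ZMod 2)) hsum
    have mk : ∀ i j : Fin 3, Int.gcd (a 0 - b i) (a 1 - b j) = 1 →
        ¬((a 0 : ZMod 2) = (b i : ZMod 2) ∧ (a 1 : ZMod 2) = (b j : ZMod 2)) := by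
      rintro i j h ⟨h1, h2⟩
      refine gcd_one_not_both _ _ h ?_ ?_ <;> push_cast <;> rw [sub_eq_zero] <;> assumption
    have p1 := mk 0 1 (by simpa using hfree 1)
    have p2 := mk 1 0 (by simpa using hfree (Equiv.swap 0 1))
    have p3 := mk 2 1 (by
      have e0 : ((Equiv.swap 0 2 : Equiv.Perm (Fin 3)) 0) = 2 := by decide
      have e1 : ((Equiv.swap 0 2 : Equiv.Perm (Fin 3)) 1) = 1 := by decide
      have := hfree (Equiv.swap 0 2); rwa [e0, e1] at this)
    have p4 := mk 0 2 (by
      have e0 : ((Equiv.swap 1 2 : Equiv.Perm (Fin 3)) 0) = 0 := by decide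
      have e1 : ((Equiv.swap 1 2 : Equiv.Perm (Fin 3)) 1) = 2 := by decide
      have := hfree (Equiv.swap 1 2); rwa [e0, e1] at this)
    have p5 := mk 1 2 (by
      have e0 : ((Equiv.swap 0 1 * Equiv.swap 1 2 : Equiv.Perm (Fin 3)) 0) = 1 := by decide
      have e1 : ((Equiv.swap 0 1 * Equiv.swap 1 2 : Equiv.Perm (Fin 3)) 1) = 2 := by decide
      have := hfree (Equiv.swap 0 1 * Equiv.swap 1 2); rwa [e0, e1] at this)
    have p6 := mk 2 0 (by
      have e0 : ((Equiv.swap 1 2 * Equiv.swap 0 1 : Equiv.Perm (Fin 3)) 0) = 2 := by decide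
      have e1 : ((Equiv.swap 1 2 * Equiv.swap 0 1 : Equiv.Perm (Fin 3)) 1) = 0 := by decide
      have := hfree (Equiv.swap 1 2 * Equiv.swap 0 1); rwa [e0, e1] at this)
    revert hz hs p1 p2 p3 p4 p5 p6
    generalize ((a 0 : ℤ) : ZMod 2) = x0
    generalize ((a 1 : ℤ) : ZMod 2) = x1
    generalize ((a 2 : ℤ) : ZMod 2) = x2
    generalize ((b 0 : ℤ) : ZMod 2) = y0
    generalize ((b 1 : ℤ) : ZMod 2) = y1
    generalize ((b 2 : ℤ) : ZMod 2) = y2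
    revert x0 x1 x2 y0 y1 y2
    decide
  refine ⟨key, fun h => ?_⟩
  rw [h] at key
  simp at key
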